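/- Fix α, w > 0 and ε ∈ (0,1). The operator A₁ : V_ε → U mapping φ to the solution c of -c'' + αw²φc = 0, c(0)=1, c'(1)=0 is compact: for any sequence {φₙ} in V_ε, the sequence {A₁(φₙ)} has a uniformly convergent subsequence. -/

import Mathlib

open Set BoundedContinuousFunction

theorem stmt9 (φ c : ℕ → ℝ → ℝ) (ε α w : ℝ)
    (hε : 0 < ε) (hε1 : ε < 1) (hα : 0 < α) (hw : 0 < w)
    (hφc : ∀ n, ContinuousOn (φ n) (Icc 0 1))
    (hφb : ∀ n, ∀ x ∈ Icc (0:ℝ) 1, ε ≤ φ n x ∧ φ n x ≤ 1)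
    (hc : ∀ n, ContDiffOn ℝ 2 (c n) (Icc 0 1))
    (hcb : ∀ n, ∀ x ∈ Icc (0:ℝ) 1, 0 ≤ c n x ∧ c n x ≤ 1)
    (heq : ∀ n, ∀ x ∈ Ioo (0:ℝ) 1,
      -(deriv (deriv (c n)) x) + α * w ^ 2 * φ n x * c n x = 0)
    (hbc0 : ∀ n, c n 0 = 1) (hbc1 : ∀ n, deriv (c n) 1 = 0) :
    ∃ (ψ : ℕ → ℕ) (climit : ℝ → ℝ), StrictMono ψ ∧ ContinuousOn climit (Icc 0 1) ∧
      TendstoUniformlyOn (fun k => c (ψ k)) climit Filter.atTop (Icc 0 1) := by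
  have haw : (0:ℝ) ≤ α * w ^ 2 := by positivity
  set L : ℝ := α * w ^ 2 + 2 with hLdef
  have hL0 : (0:ℝ) ≤ L := by positivity
  -- Step 1: uniform Lipschitz bound on Icc 0 1
  have key : ∀ n, ∀ x ∈ Icc (0:ℝ) 1, ∀ y ∈ Icc (0:ℝ) 1,
      dist (c n x) (c n y) ≤ L * dist x y := by
    intro n
    have hd1 : ∀ x ∈ Ioo (0:ℝ) 1, HasDerivAt (c n) (deriv (c n) x) x := by
      intro x hx
      exact (((hc n).contDiffAt (Icc_mem_nhds hx.1 hx.2)).differentiableAt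
        (by norm_num)).hasDerivAt
    have hcd : ContDiffOn ℝ 1 (deriv (c n)) (Ioo 0 1) :=
      ((hc n).mono Ioo_subset_Icc_self).deriv_of_isOpen isOpen_Ioo (by norm_num)
    have hd2 : ∀ x ∈ Ioo (0:ℝ) 1, HasDerivAt (deriv (c n)) (deriv (deriv (c n)) x) x := by
      intro x hx
      exact (((hcd.differentiableOn (by norm_num)) x hx).differentiableAt
        (isOpen_Ioo.mem_nhds hx)).hasDerivAt
    have h2bound : ∀ x ∈ Ioo (0:ℝ) 1, |deriv (deriv (c n)) x| ≤ α * w ^ 2 := by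
      intro x hx
      have hxI : x ∈ Icc (0:ℝ) 1 := Ioo_subset_Icc_self hx
      have h2 : deriv (deriv (c n)) x = α * w ^ 2 * φ n x * c n x := by
        have := heq n x hx; linarith
      obtain ⟨hφ1, hφ2⟩ := hφb n x hxI
      obtain ⟨hc1, hc2⟩ := hcb n x hxI
      have hφ0 : 0 ≤ φ n x := le_trans hε.le hφ1
      have hprod : φ n x * c n x ≤ 1 := by nlinarith
      rw [h2, abs_of_nonneg (mul_nonneg (mul_nonneg haw hφ0) hc1)]
      calc α * w ^ 2 * φ n x * c n x = α * w ^ 2 * (φ n x * c n x) := by ring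
        _ ≤ α * w ^ 2 * 1 := mul_le_mul_of_nonneg_left hprod haw
        _ = α * w ^ 2 := mul_one _
    -- deriv (c n) is Lipschitz on Ioo 0 1 with constant α w²
    have hgLip : LipschitzOnWith (α * w ^ 2).toNNReal (deriv (c n)) (Ioo 0 1) := by
      apply (convex_Ioo (0:ℝ) 1).lipschitzOnWith_of_nnnorm_hasDerivWithin_le
        (fun x hx => (hd2 x hx).hasDerivWithinAt)
      intro x hx
      rw [← NNReal.coe_le_coe, coe_nnnorm, Real.norm_eq_abs, Real.coe_toNNReal _ haw]
      exact h2bound x hx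
    -- anchor point via the mean value theorem
    obtain ⟨ξ, hξ, hslope⟩ := exists_hasDerivAt_eq_slope (c n) (deriv (c n))
      (show (1:ℝ)/4 < 3/4 by norm_num)
      ((hc n).continuousOn.mono (Icc_subset_Icc (by norm_num) (by norm_num)))
      (fun x hx => hd1 x ⟨by linarith [hx.1], by linarith [hx.2]⟩)
    have hξI : ξ ∈ Ioo (0:ℝ) 1 := ⟨by linarith [hξ.1], by linarith [hξ.2]⟩
    have hanchor : |deriv (c n) ξ| ≤ 2 := by
      obtain ⟨h34a, h34b⟩ := hcb n (3/4) (by norm_num)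
      obtain ⟨h14a, h14b⟩ := hcb n (1/4) (by norm_num)
      rw [hslope, show (c n (3/4) - c n (1/4)) / ((3:ℝ)/4 - 1/4)
        = 2 * (c n (3/4) - c n (1/4)) by ring]
      rw [abs_le]; constructor <;> linarith
    have gbound : ∀ x ∈ Ioo (0:ℝ) 1, |deriv (c n) x| ≤ L := by
      intro x hx
      have hdist := hgLip.dist_le_mul x hx ξ hξI
      rw [Real.coe_toNNReal _ haw, Real.dist_eq, Real.dist_eq] at hdist
      have hxξ : |x - ξ| ≤ 1 := by
        rw [abs_le]; constructor <;> [linarith [hx.1, hξI.2]; linarith [hx.2, hξI.1]]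
      have h1 : |deriv (c n) x - deriv (c n) ξ| ≤ α * w ^ 2 := by
        calc |deriv (c n) x - deriv (c n) ξ| ≤ α * w ^ 2 * |x - ξ| := hdist
        _ ≤ α * w ^ 2 * 1 := by nlinarith [abs_nonneg (x - ξ)]
        _ = α * w ^ 2 := by ring
      calc |deriv (c n) x| ≤ |deriv (c n) x - deriv (c n) ξ| + |deriv (c n) ξ| := by
            have := abs_sub_abs_le_abs_sub (deriv (c n) x) (deriv (c n) ξ); linarith
        _ ≤ α * w ^ 2 + 2 := add_le_add h1 hanchor
    -- c n is Lipschitz on Ioo 0 1 with constant L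
    have hcLip : LipschitzOnWith L.toNNReal (c n) (Ioo 0 1) := by
      apply (convex_Ioo (0:ℝ) 1).lipschitzOnWith_of_nnnorm_hasDerivWithin_le
        (fun x hx => (hd1 x hx).hasDerivWithinAt)
      intro x hx
      rw [← NNReal.coe_le_coe, coe_nnnorm, Real.norm_eq_abs, Real.coe_toNNReal _ hL0]
      exact gbound x hx
    -- extend the Lipschitz estimate to the closure Icc 0 1
    have hclos : closure (Ioo (0:ℝ) 1 ×ˢ Ioo (0:ℝ) 1) = Icc (0:ℝ) 1 ×ˢ Icc (0:ℝ) 1 := by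
      rw [closure_prod_eq, closure_Ioo (by norm_num : (0:ℝ) ≠ 1)]
    have hle := le_on_closure
      (f := fun p : ℝ × ℝ => dist (c n p.1) (c n p.2))
      (g := fun p : ℝ × ℝ => L * dist p.1 p.2)
      (s := Ioo (0:ℝ) 1 ×ˢ Ioo (0:ℝ) 1)
      (fun p hp => by
        have := hcLip.dist_le_mul p.1 hp.1 p.2 hp.2
        rwa [Real.coe_toNNReal _ hL0] at this)
      (by
        rw [hclos]
        exact continuous_dist.comp_continuousOn
          (((hc n).continuousOn.comp continuous_fst.continuousOn (fun p (hp : p ∈ Icc (0:ℝ) 1 ×ˢ Icc (0:ℝ) 1) => hp.1)).prodMk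
           ((hc n).continuousOn.comp continuous_snd.continuousOn (fun p (hp : p ∈ Icc (0:ℝ) 1 ×ˢ Icc (0:ℝ) 1) => hp.2))))
      (by
        exact (continuous_const.mul (continuous_fst.dist continuous_snd)).continuousOn)
    intro x hx y hy
    exact hle (x := (x, y)) (by rw [hclos]; exact ⟨hx, hy⟩)
  -- Step 2: Arzelà–Ascoli
  haveI : CompactSpace (Icc (0:ℝ) 1) := isCompact_iff_compactSpace.mp isCompact_Icc
  let F : ℕ → (Icc (0:ℝ) 1 →ᵇ ℝ) := fun n =>
    BoundedContinuousFunction.mkOfCompact ⟨fun x => c n x, (continuousOn_iff_continuous_restrict.mp (hc n).continuousOn)⟩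
  let A : Set (Icc (0:ℝ) 1 →ᵇ ℝ) :=
    {f | (∀ x y, dist (f x) (f y) ≤ L * dist x y) ∧ ∀ x, f x ∈ Icc (0:ℝ) 1}
  have hFA : ∀ n, F n ∈ A := by
    intro n
    refine ⟨fun x y => ?_, fun x => ⟨(hcb n x x.2).1, (hcb n x x.2).2⟩⟩
    have := key n x x.2 y y.2
    rw [Subtype.dist_eq]; exact this
  have hequi : Equicontinuous ((↑) : A → (Icc (0:ℝ) 1) → ℝ) := by
    apply Metric.equicontinuous_of_continuity_modulus (fun r => L * r)
    · have : Filter.Tendsto (fun r : ℝ => L * r) (nhds 0) (nhds (L * 0)) :=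
        (continuous_const.mul continuous_id).tendsto 0
      simpa using this
    · exact fun x y f => f.2.1 x y
  have hcompact : IsCompact (closure A) :=
    BoundedContinuousFunction.arzela_ascoli (Icc (0:ℝ) 1) isCompact_Icc A
      (fun f x hf => hf.2 x) hequi
  obtain ⟨f, -, ψ, hψ, htend⟩ :=
    hcompact.tendsto_subseq (x := F) (fun n => subset_closure (hFA n))
  refine ⟨ψ, fun x => if h : x ∈ Icc (0:ℝ) 1 then f ⟨x, h⟩ else 0, hψ, ?_, ?_⟩
  · rw [continuousOn_iff_continuous_restrict]
    have : (Icc (0:ℝ) 1).restrict (fun x => if h : x ∈ Icc (0:ℝ) 1 then f ⟨x, h⟩ else 0)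
        = fun x : Icc (0:ℝ) 1 => f x := by
      funext x; exact dif_pos x.2
    show Continuous ((Icc (0:ℝ) 1).restrict (fun x => if h : x ∈ Icc (0:ℝ) 1 then f ⟨x, h⟩ else 0)); rw [this]
    exact f.continuous
  · rw [tendstoUniformlyOn_iff_tendstoUniformly_comp_coe]
    have h1 : (fun k (x : Icc (0:ℝ) 1) => c (ψ k) x) = fun k (x : Icc (0:ℝ) 1) => F (ψ k) x :=
      rfl
    have h2 : ((fun x => if h : x ∈ Icc (0:ℝ) 1 then f ⟨x, h⟩ else 0) ∘
        ((↑) : Icc (0:ℝ) 1 → ℝ)) = fun x : Icc (0:ℝ) 1 => f x := by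
      funext x; exact dif_pos x.2
    rw [h1, h2]
    exact BoundedContinuousFunction.tendsto_iff_tendstoUniformly.mp htend
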